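/- If (T₁,T₂) has the skewed bivariate BS distribution with parameters (α₁, α₂, β₁, β₂, λ), then (1/T₁, 1/T₂) has the skewed bivariate BS distribution with parameters (α₁, α₂, 1/β₁, 1/β₂, λ); equivalently f(1/t₁, 1/t₂; α₁,α₂,1/β₁,1/β₂,λ)/(t₁²t₂²) = f(t₁,t₂; α₁,α₂,β₁,β₂,λ) for all t₁, t₂ > 0. -/
import Mathlib

open Real MeasureTheory

/-- Standard normal pdf. -/
noncomputable def phi (x : ℝ) : ℝ := (Real.sqrt (2 * Real.pi))⁻¹ * Real.exp (-x ^ 2 / 2)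

/-- Standard normal cdf. -/
noncomputable def Phi (x : ℝ) : ℝ := ∫ t in Set.Iic x, phi t

noncomputable def aj (a b t : ℝ) : ℝ := (1/a) * (Real.sqrt (t / b) - Real.sqrt (b / t))

/-- Skewed bivariate Birnbaum–Saunders density. -/
noncomputable def fSBVBS (a1 a2 b1 b2 l t1 t2 : ℝ) : ℝ :=
  2 * phi (aj a1 b1 t1) * phi (aj a2 b2 t2) * Phi (l * (aj a1 b1 t1) * (aj a2 b2 t2)) *
    (t1 ^ (-(3:ℝ)/2) * (t1 + b1) / (2 * a1 * Real.sqrt b1)) *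
    (t2 ^ (-(3:ℝ)/2) * (t2 + b2) / (2 * a2 * Real.sqrt b2))


lemma aj_inv (a b t : ℝ) (hb : 0 < b) (ht : 0 < t) : aj a (1/b) (1/t) = - aj a b t := by
  unfold aj
  have h1 : (1/t)/(1/b) = b/t := by field_simp
  have h2 : (1/b)/(1/t) = t/b := by field_simp
  rw [h1, h2]; ring

lemma phi_neg (x : ℝ) : phi (-x) = phi x := by unfold phi; rw [neg_sq]

lemma jac (a b t : ℝ) (ha : 0 < a) (hb : 0 < b) (ht : 0 < t) :
    ((1/t) ^ (-(3:ℝ)/2) * (1/t + 1/b) / (2 * a * Real.sqrt (1/b))) / t^2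
      = t ^ (-(3:ℝ)/2) * (t + b) / (2 * a * Real.sqrt b) := by
  rw [one_div t, Real.inv_rpow ht.le, one_div b, Real.sqrt_inv]
  have h3 : (t ^ (-(3:ℝ)/2))⁻¹ = t ^ (-(3:ℝ)/2) * t^3 := by
    rw [← Real.rpow_neg ht.le, ← Real.rpow_natCast t 3, ← Real.rpow_add ht]
    norm_num
  rw [h3]
  have hsb : Real.sqrt b ≠ 0 := (Real.sqrt_pos.mpr hb).ne'
  have hbb : Real.sqrt b * Real.sqrt b = b := Real.mul_self_sqrt hb.le
  field_simp
  ring_nf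
  rw [Real.sq_sqrt hb.le]
  ring

theorem SBVBS_reciprocal_both (a1 a2 b1 b2 l t1 t2 : ℝ)
    (ha1 : 0 < a1) (ha2 : 0 < a2) (hb1 : 0 < b1) (hb2 : 0 < b2)
    (ht1 : 0 < t1) (ht2 : 0 < t2) :
    fSBVBS a1 a2 (1 / b1) (1 / b2) l (1 / t1) (1 / t2) / (t1 ^ 2 * t2 ^ 2)
      = fSBVBS a1 a2 b1 b2 l t1 t2 := by
  unfold fSBVBS
  rw [aj_inv a1 b1 t1 hb1 ht1, aj_inv a2 b2 t2 hb2 ht2, phi_neg, phi_neg]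
  have hPhi : l * -aj a1 b1 t1 * -aj a2 b2 t2 = l * aj a1 b1 t1 * aj a2 b2 t2 := by ring
  rw [hPhi]
  have j1 := jac a1 b1 t1 ha1 hb1 ht1
  have j2 := jac a2 b2 t2 ha2 hb2 ht2
  calc 2 * phi (aj a1 b1 t1) * phi (aj a2 b2 t2) * Phi (l * aj a1 b1 t1 * aj a2 b2 t2) *
      ((1/t1) ^ (-(3:ℝ)/2) * (1/t1 + 1/b1) / (2 * a1 * Real.sqrt (1/b1))) *
      ((1/t2) ^ (-(3:ℝ)/2) * (1/t2 + 1/b2) / (2 * a2 * Real.sqrt (1/b2))) / (t1 ^ 2 * t2 ^ 2)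
      = 2 * phi (aj a1 b1 t1) * phi (aj a2 b2 t2) * Phi (l * aj a1 b1 t1 * aj a2 b2 t2) *
      (((1/t1) ^ (-(3:ℝ)/2) * (1/t1 + 1/b1) / (2 * a1 * Real.sqrt (1/b1))) / t1^2) *
      (((1/t2) ^ (-(3:ℝ)/2) * (1/t2 + 1/b2) / (2 * a2 * Real.sqrt (1/b2))) / t2^2) := by ring
    _ = _ := by rw [j1, j2]
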